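/- Let X be a set of ordinals which, with the subspace topology inherited from the order topology on the ordinals, is countably compact. Then X admits a full retractional skeleton (i.e., X is non-commutative Corson) if and only if every ordinal in X of uncountable cofinality is an isolated point of X. -/

import Mathlib

open Filter Topology Set

universe u

section Defs

/-- A space is countably compact if every countable open cover has a finite subcover. -/
def CountablyCompact (X : Type u) [TopologicalSpace X] : Prop :=
  ∀ U : ℕ → Set X, (∀ n, IsOpen (U n)) → (⋃ n, U n) = Set.univ →
    ∃ t : Finset ℕ, (⋃ n ∈ t, U n) = Set.univ

variable {X : Type u} [TopologicalSpace X]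

/-- A retractional skeleton on a topological space `X`. -/
structure IsRetractionalSkeleton {Γ : Type u} [PartialOrder Γ] (r : Γ → X → X) : Prop where
  nonempty : Nonempty Γ
  directed : ∀ s t : Γ, ∃ w, s ≤ w ∧ t ≤ w
  continuous : ∀ s, Continuous (r s)
  retraction : ∀ s, r s ∘ r s = r s
  compact_range : ∀ s, IsCompact (Set.range (r s))
  metrizable_range : ∀ s, TopologicalSpace.MetrizableSpace (Set.range (r s))
  comp_eq_of_le : ∀ s t, s ≤ t → r t ∘ r s = r s ∧ r s ∘ r t = r s
  seq_sup : ∀ u : ℕ → Γ, Monotone u →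
    ∃ t, IsLUB (Set.range u) t ∧
      ∀ x, Filter.Tendsto (fun n => r (u n) x) Filter.atTop (nhds (r t x))
  tendsto_id : ∀ x, Filter.Tendsto (fun s => r s x) Filter.atTop (nhds x)

/-- `X` admits a retractional skeleton (non-commutative Valdivia when `X` is compact). -/
def HasRetractionalSkeleton (X : Type u) [TopologicalSpace X] : Prop :=
  ∃ (Γ : Type u) (_ : PartialOrder Γ) (r : Γ → X → X), IsRetractionalSkeleton r

/-- `X` admits a full retractional skeleton. -/
def HasFullRetractionalSkeleton (X : Type u) [TopologicalSpace X] : Prop :=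
  ∃ (Γ : Type u) (_ : PartialOrder Γ) (r : Γ → X → X),
    IsRetractionalSkeleton r ∧ ∀ x : X, ∃ s, x ∈ Set.range (r s)

/-- A non-commutative Corson countably compact space. -/
def IsNCCorson (X : Type u) [TopologicalSpace X] : Prop :=
  CountablyCompact X ∧ HasFullRetractionalSkeleton X

/-- A weakly non-commutative Corson countably compact space: a countably compact
continuous image of a non-commutative Corson countably compact space. -/
def IsWeaklyNCCorson (Y : Type u) [TopologicalSpace Y] : Prop :=
  CountablyCompact Y ∧
  ∃ (X : Type u) (_ : TopologicalSpace X) (_ : T2Space X) (_ : CompletelyRegularSpace X),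
    IsNCCorson X ∧ ∃ f : X → Y, Continuous f ∧ Function.Surjective f

/-- A weakly non-commutative Valdivia compact space: a compact space with a dense
countably compact subspace which is weakly non-commutative Corson. -/
def IsWeaklyNCValdivia (K : Type u) [TopologicalSpace K] : Prop :=
  CompactSpace K ∧ ∃ D : Set K, Dense D ∧ IsWeaklyNCCorson ↥D

end Defs

/-! ### Auxiliary material -/

namespace NCCAux

/-- A point of a set of ordinals which is a limit of the set from below. -/
def NI (X : Set Ordinal.{u}) (c : Ordinal.{u}) : Prop :=
  c ∈ X ∧ 0 < c ∧ ∀ β < c, (X ∩ Set.Ioo β c).Nonempty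

section Basic

variable {X : Set Ordinal.{u}}

lemma bddIic (Y : Set Ordinal.{u}) (a : Ordinal.{u}) : BddAbove (Y ∩ Set.Iic a) :=
  ⟨a, fun _ hy => hy.2⟩

lemma bddCountable {Y : Set Ordinal.{u}} (h : Y.Countable) : BddAbove Y := by
  have := h.to_subtype; exact Ordinal.bddAbove_of_small (s := Y)

lemma Ioc_mem_nhds_self {a b : Ordinal.{u}} (h : a < b) : Set.Ioc a b ∈ 𝓝 b := by
  have h2 : Set.Ioo a (Order.succ b) ∈ 𝓝 b := isOpen_Ioo.mem_nhds ⟨h, Order.lt_succ b⟩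
  rwa [Order.Ioo_succ_right_of_not_isMax (not_isMax b)] at h2

lemma isOpen_Iic (c : Ordinal.{u}) : IsOpen (Set.Iic c) := by
  rw [← Order.Iio_succ]; exact isOpen_Iio

lemma isOpen_Ioc' (a b : Ordinal.{u}) : IsOpen (Set.Ioc a b) := by
  rw [← Order.Ioo_succ_right_of_not_isMax (not_isMax b)]; exact isOpen_Ioo

lemma ni_of_not_isOpen {α : Ordinal.{u}} (hα : α ∈ X)
    (h : ¬ IsOpen ({⟨α, hα⟩} : Set ↥X)) : NI X α := by
  refine ⟨hα, ?_, ?_⟩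
  · by_contra h0
    have h0' : α = 0 := by
      rcases eq_zero_or_pos α with h' | h'
      · exact h'
      · exact absurd h' h0
    apply h
    have hset : ({⟨α, hα⟩} : Set ↥X) = Subtype.val ⁻¹' (Set.Iic (0 : Ordinal)) := by
      ext y
      simp only [Set.mem_singleton_iff, Set.mem_preimage, Set.mem_Iic, nonpos_iff_eq_zero,
        Subtype.ext_iff, h0']
    rw [hset]
    exact (isOpen_Iic 0).preimage continuous_subtype_val
  · intro β hβ
    by_contra hemp
    rw [Set.not_nonempty_iff_eq_empty] at hemp
    apply h
    have hset : ({⟨α, hα⟩} : Set ↥X) = Subtype.val ⁻¹' (Set.Ioc β α) := by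
      ext y
      simp only [Set.mem_singleton_iff, Set.mem_preimage, Set.mem_Ioc, Subtype.ext_iff]
      constructor
      · rintro rfl; exact ⟨hβ, le_refl _⟩
      · rintro ⟨h1, h2⟩
        rcases eq_or_lt_of_le h2 with h3 | h3
        · exact h3
        · exfalso
          have hcon : (y : Ordinal) ∈ X ∩ Set.Ioo β α := ⟨y.2, h1, h3⟩
          rw [hemp] at hcon
          exact Set.notMem_empty _ hcon
    rw [hset]
    exact (isOpen_Ioc' β α).preimage continuous_subtype_val

lemma not_isOpen_of_ni {α : Ordinal.{u}} (h : NI X α) :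
    ¬ IsOpen ({⟨α, h.1⟩} : Set ↥X) := by
  intro hop
  have hmem : ({⟨α, h.1⟩} : Set ↥X) ∈ 𝓝 (⟨α, h.1⟩ : ↥X) := hop.mem_nhds rfl
  rw [nhds_subtype_eq_comap] at hmem
  obtain ⟨V, hV, hVsub⟩ := Filter.mem_comap.1 hmem
  obtain ⟨l, hl, hsub⟩ := exists_Ioc_subset_of_mem_nhds hV ⟨0, h.2.1⟩
  obtain ⟨y, hyX, hy1, hy2⟩ := h.2.2 l hl
  have h1 : (⟨y, hyX⟩ : ↥X) ∈ Subtype.val ⁻¹' V := hsub ⟨hy1, hy2.le⟩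
  have h2 := hVsub h1
  rw [Set.mem_singleton_iff, Subtype.ext_iff] at h2
  exact absurd h2 (ne_of_lt hy2)

/-- In a countably compact set of ordinals, the supremum of a monotone sequence of
elements belongs to the set. -/
lemma iSup_mem_of_monotone (hX : CountablyCompact ↥X) {g : ℕ → Ordinal.{u}}
    (hm : Monotone g) (hg : ∀ n, g n ∈ X) : (⨆ n, g n) ∈ X := by
  classical
  set β := ⨆ n, g n with hβ
  have hbd : BddAbove (Set.range g) := bddCountable (Set.countable_range g)
  by_contra hmem
  set U : ℕ → Set ↥X := fun n =>
    Nat.casesOn n (Subtype.val ⁻¹' Set.Ioi β) (fun m => Subtype.val ⁻¹' Set.Iio (g m)) with hU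
  have hopen : ∀ n, IsOpen (U n) := by
    rintro (_ | m)
    · exact isOpen_Ioi.preimage continuous_subtype_val
    · exact isOpen_Iio.preimage continuous_subtype_val
  have hcov : (⋃ n, U n) = Set.univ := by
    ext x
    simp only [Set.mem_iUnion, Set.mem_univ, iff_true]
    rcases lt_trichotomy x.val β with h | h | h
    · obtain ⟨n, hn⟩ := (lt_ciSup_iff hbd).1 h
      exact ⟨n + 1, hn⟩
    · exact absurd (h ▸ x.2) hmem
    · exact ⟨0, h⟩
  obtain ⟨t, ht⟩ := hX U hopen hcov
  set N := t.sup id with hN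
  have hx : (⟨g N, hg N⟩ : ↥X) ∈ ⋃ n ∈ t, U n := ht ▸ Set.mem_univ _
  simp only [Set.mem_iUnion] at hx
  obtain ⟨n, hnt, hn⟩ := hx
  match n, hnt, hn with
  | 0, hnt, hn =>
    exact absurd (le_ciSup hbd N) (not_le.2 hn)
  | (m+1), hnt, hn =>
    have h1 : m + 1 ≤ N := Finset.le_sup (f := id) hnt
    exact absurd (hm (le_trans (Nat.le_succ m) h1)) (not_le.2 hn)

lemma exists_monotone_of_countable {S : Set Ordinal.{u}} (hc : S.Countable) (hne : S.Nonempty) :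
    ∃ g : ℕ → Ordinal.{u}, Monotone g ∧ (∀ n, g n ∈ S) ∧ (⨆ n, g n) = sSup S := by
  obtain ⟨e, rfl⟩ := hc.exists_eq_range hne
  set g : ℕ → Ordinal.{u} := fun n => Nat.rec (e 0) (fun m gm => max gm (e (m + 1))) n with hgdef
  have hgs : ∀ n, g (n + 1) = max (g n) (e (n + 1)) := fun n => rfl
  have hmono : Monotone g := monotone_nat_of_le_succ (fun n => by rw [hgs]; exact le_max_left _ _)
  have hmem : ∀ n, g n ∈ Set.range e := by
    intro n
    induction n with
    | zero => exact ⟨0, rfl⟩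
    | succ m ih =>
      rw [hgs]
      rcases le_total (g m) (e (m + 1)) with h | h
      · rw [max_eq_right h]; exact ⟨m + 1, rfl⟩
      · rw [max_eq_left h]; exact ih
  have hle : ∀ n, e n ≤ g n := by
    intro n
    cases n with
    | zero => exact le_refl _
    | succ m => rw [hgs]; exact le_max_right _ _
  have hbd : BddAbove (Set.range e) := bddCountable (Set.countable_range e)
  have hbd2 : BddAbove (Set.range g) := hbd.mono (Set.range_subset_iff.2 hmem)
  refine ⟨g, hmono, hmem, le_antisymm ?_ ?_⟩
  · exact ciSup_le fun n => le_csSup hbd (hmem n)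
  · refine csSup_le (Set.range_nonempty e) ?_
    rintro y ⟨n, rfl⟩
    exact le_trans (hle n) (le_ciSup hbd2 n)

lemma csSup_mem_X (hX : CountablyCompact ↥X) {S : Set Ordinal.{u}} (hc : S.Countable)
    (hne : S.Nonempty) (hsub : S ⊆ X) : sSup S ∈ X := by
  obtain ⟨g, hmono, hmem, hsup⟩ := exists_monotone_of_countable hc hne
  rw [← hsup]
  exact iSup_mem_of_monotone hX hmono (fun n => hsub (hmem n))

lemma exists_cofinal_seq {c : Ordinal.{u}} (h : NI X c)
    (hcof : Ordinal.cof c ≤ Cardinal.aleph0) :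
    ∃ g : ℕ → Ordinal.{u}, (∀ n, g n ∈ X ∩ Set.Iio c) ∧ ∀ β < c, ∃ n, β < g n := by
  classical
  have hfam : ∃ e : ℕ → Ordinal.{u}, (∀ n, e n < c) ∧ ∀ a < c, ∃ n, a ≤ e n := by
    have h1 : Ordinal.cof c ∈ {a : Cardinal | ∃ (ι : Type u) (f : ι → Ordinal.{u}),
        Ordinal.lsub.{u, u} f = c ∧ Cardinal.mk ι = a} := by
      rw [Ordinal.cof_eq_sInf_lsub]
      exact csInf_mem (Ordinal.cof_lsub_def_nonempty c)
    obtain ⟨ι, f, hlsub, hcard⟩ := h1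
    have hcount : Countable ι := by
      rw [← Cardinal.mk_le_aleph0_iff, hcard]; exact hcof
    have hι : Nonempty ι := by
      by_contra hno
      rw [not_nonempty_iff] at hno
      have h2 : c ≤ 0 := hlsub ▸ Ordinal.lsub_le (fun i => (hno.elim i))
      exact absurd (lt_of_lt_of_le h.2.1 h2) (lt_irrefl 0)
    obtain ⟨s, hs⟩ := exists_surjective_nat ι
    refine ⟨f ∘ s, fun n => ?_, fun a ha => ?_⟩
    · rw [← hlsub]; exact Ordinal.lt_lsub f (s n)
    · rw [← hlsub] at ha
      obtain ⟨i, hi⟩ := Ordinal.lt_lsub_iff.1 ha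
      obtain ⟨n, rfl⟩ := hs i
      exact ⟨n, hi⟩
  obtain ⟨e, helt, hecof⟩ := hfam
  have pick : ∀ β, β < c → {y : Ordinal.{u} // y ∈ X ∩ Set.Iio c ∧ β < y} := by
    intro β hβ
    have hne := h.2.2 β hβ
    exact ⟨hne.choose, ⟨hne.choose_spec.1, hne.choose_spec.2.2⟩, hne.choose_spec.2.1⟩
  set g : ℕ → {y : Ordinal.{u} // y ∈ X ∩ Set.Iio c} := fun n => Nat.rec
      (⟨(pick (e 0) (helt 0)).1, (pick (e 0) (helt 0)).2.1⟩)
      (fun m q => ⟨(pick (max (e (m + 1)) q.1) (max_lt (helt (m + 1)) q.2.2)).1,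
        (pick (max (e (m + 1)) q.1) (max_lt (helt (m + 1)) q.2.2)).2.1⟩) n with hg
  have hg0 : e 0 < (g 0).1 := (pick (e 0) (helt 0)).2.2
  have hgsucc : ∀ n, max (e (n + 1)) ((g n).1) < (g (n + 1)).1 := by
    intro n
    exact (pick (max (e (n + 1)) ((g n).1)) (max_lt (helt (n + 1)) (g n).2.2)).2.2
  have hel : ∀ n, e n < (g n).1 := by
    intro n
    cases n with
    | zero => exact hg0
    | succ m => exact lt_of_le_of_lt (le_max_left _ _) (hgsucc m)
  refine ⟨fun n => (g n).1, fun n => (g n).2, ?_⟩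
  intro β hβ
  obtain ⟨n, hn⟩ := hecof β hβ
  exact ⟨n, lt_of_le_of_lt hn (hel n)⟩

end Basic

/-! ### The closure operation `GSet` capturing limits from below -/

section GSet

variable {X : Set Ordinal.{u}} {cs : Ordinal.{u} → ℕ → Ordinal.{u}}

noncomputable def GSet (X : Set Ordinal.{u}) (cs : Ordinal.{u} → ℕ → Ordinal.{u})
    (hlt : ∀ c, NI X c → ∀ n, cs c n < c) : Ordinal.{u} → Set Ordinal.{u} :=
  WellFounded.fix Ordinal.lt_wf (fun c IH =>
    {c} ∪ ⋃ (h : NI X c), ⋃ n : ℕ, IH (cs c n) (hlt c h n))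

variable {hlt : ∀ c, NI X c → ∀ n, cs c n < c}

lemma GSet_eq (c : Ordinal.{u}) :
    GSet X cs hlt c = {c} ∪ ⋃ (h : NI X c), ⋃ n : ℕ, GSet X cs hlt (cs c n) :=
  WellFounded.fix_eq _ _ _

lemma GSet_self (c : Ordinal.{u}) : c ∈ GSet X cs hlt c := by
  rw [GSet_eq]; exact Or.inl rfl

lemma GSet_sub (c : Ordinal.{u}) (h : NI X c) (n : ℕ) :
    GSet X cs hlt (cs c n) ⊆ GSet X cs hlt c := by
  intro y hy
  rw [GSet_eq c]
  exact Or.inr (Set.mem_iUnion.2 ⟨h, Set.mem_iUnion.2 ⟨n, hy⟩⟩)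

lemma GSet_sub_X (hcs : ∀ c, NI X c → ∀ n, cs c n ∈ X) :
    ∀ c, c ∈ X → GSet X cs hlt c ⊆ X := by
  intro c
  induction c using Ordinal.induction with
  | h c IH =>
    intro hc y hy
    rw [GSet_eq] at hy
    rcases hy with hy | hy
    · rw [Set.mem_singleton_iff] at hy; exact hy ▸ hc
    · obtain ⟨hni, hy⟩ := Set.mem_iUnion.1 hy
      obtain ⟨n, hy⟩ := Set.mem_iUnion.1 hy
      exact IH (cs c n) (hlt c hni n) (hcs c hni n) hy

lemma GSet_countable : ∀ c, (GSet X cs hlt c).Countable := by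
  intro c
  induction c using Ordinal.induction with
  | h c IH =>
    rw [GSet_eq]
    refine (Set.countable_singleton c).union ?_
    refine Set.countable_iUnion (fun h => ?_)
    exact Set.countable_iUnion (fun n => IH (cs c n) (hlt c h n))

lemma GSet_trans : ∀ c, ∀ d ∈ GSet X cs hlt c, GSet X cs hlt d ⊆ GSet X cs hlt c := by
  intro c
  induction c using Ordinal.induction with
  | h c IH =>
    intro d hd
    rw [GSet_eq] at hd
    rcases hd with hd | hd
    · rw [Set.mem_singleton_iff] at hd; exact hd ▸ subset_rfl
    · obtain ⟨hni, hd⟩ := Set.mem_iUnion.1 hd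
      obtain ⟨n, hd⟩ := Set.mem_iUnion.1 hd
      exact subset_trans (IH (cs c n) (hlt c hni n) d hd) (GSet_sub c hni n)

lemma GSet_capture (hcs2 : ∀ c, NI X c → ∀ β < c, ∃ n, β < cs c n) {c : Ordinal.{u}}
    {d : Ordinal.{u}} (hd : d ∈ GSet X cs hlt c) (hni : NI X d) {β : Ordinal.{u}} (hβ : β < d) :
    (GSet X cs hlt c ∩ Set.Ioo β d).Nonempty := by
  obtain ⟨n, hn⟩ := hcs2 d hni β hβ
  refine ⟨cs d n, GSet_trans c d hd ?_, hn, hlt d hni n⟩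
  exact GSet_sub d hni n (GSet_self (cs d n))

end GSet

/-! ### Good subsets and the sup-closure `LClo` -/

section GoodSets

variable {X : Set Ordinal.{u}}

/-- Countable subsets of `X` suitable as ranges of retractions. -/
structure Good (X C : Set Ordinal.{u}) : Prop where
  subX : C ⊆ X
  count : C.Countable
  supmem : ∀ a : Ordinal.{u}, (C ∩ Set.Iic a).Nonempty → sSup (C ∩ Set.Iic a) ∈ C
  capt : ∀ c ∈ C, NI X c → ∀ β < c, (C ∩ Set.Ioo β c).Nonempty
  low : ∀ x ∈ X, (C ∩ Set.Iic x).Nonempty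

def LClo (Y : Set Ordinal.{u}) : Set Ordinal.{u} :=
  {v | ∃ a : Ordinal.{u}, (Y ∩ Set.Iic a).Nonempty ∧ v = sSup (Y ∩ Set.Iic a)}

lemma mem_LClo {Y : Set Ordinal.{u}} {v : Ordinal.{u}} :
    v ∈ LClo Y ↔ ∃ a : Ordinal.{u}, (Y ∩ Set.Iic a).Nonempty ∧ v = sSup (Y ∩ Set.Iic a) :=
  Iff.rfl

lemma subset_LClo (Y : Set Ordinal.{u}) : Y ⊆ LClo Y := by
  intro y hy
  have hyne : (Y ∩ Set.Iic y).Nonempty := ⟨y, hy, Set.mem_Iic.2 (le_refl y)⟩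
  have hsup : sSup (Y ∩ Set.Iic y) = y :=
    le_antisymm (csSup_le hyne (fun z hz => Set.mem_Iic.1 hz.2))
      (le_csSup (bddIic Y y) ⟨hy, Set.mem_Iic.2 (le_refl y)⟩)
  exact mem_LClo.2 ⟨y, hyne, hsup.symm⟩

lemma LClo_spec {Y : Set Ordinal.{u}} {v : Ordinal.{u}} (hv : v ∈ LClo Y) :
    (Y ∩ Set.Iic v).Nonempty ∧ v = sSup (Y ∩ Set.Iic v) := by
  obtain ⟨a, hne, rfl⟩ := hv
  have hsub1 : Y ∩ Set.Iic a ⊆ Y ∩ Set.Iic (sSup (Y ∩ Set.Iic a)) :=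
    fun y hy => ⟨hy.1, le_csSup (bddIic Y a) hy⟩
  have hne' := hne.mono hsub1
  refine ⟨hne', le_antisymm ?_ ?_⟩
  · exact csSup_le_csSup (bddIic Y _) hne hsub1
  · exact csSup_le hne' (fun y hy => hy.2)

lemma LClo_sup_eq {Y : Set Ordinal.{u}} {a : Ordinal.{u}}
    (hne : (LClo Y ∩ Set.Iic a).Nonempty) :
    (Y ∩ Set.Iic a).Nonempty ∧ sSup (LClo Y ∩ Set.Iic a) = sSup (Y ∩ Set.Iic a) := by
  obtain ⟨v, hvL, hva⟩ := hne
  have h1 := LClo_spec hvL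
  have hYa : (Y ∩ Set.Iic a).Nonempty :=
    h1.1.mono (fun y hy =>
      ⟨hy.1, Set.mem_Iic.2 (le_trans (Set.mem_Iic.1 hy.2) (Set.mem_Iic.1 hva))⟩)
  refine ⟨hYa, le_antisymm ?_ ?_⟩
  · refine csSup_le ⟨v, hvL, hva⟩ ?_
    rintro w ⟨hwL, hwa⟩
    have h2 := LClo_spec hwL
    rw [h2.2]
    exact csSup_le_csSup (bddIic Y a) h2.1 (fun y hy =>
      ⟨hy.1, Set.mem_Iic.2 (le_trans (Set.mem_Iic.1 hy.2) (Set.mem_Iic.1 hwa))⟩)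
  · have hmem2 : sSup (Y ∩ Set.Iic a) ∈ LClo Y ∩ Set.Iic a :=
      ⟨mem_LClo.2 ⟨a, hYa, rfl⟩, Set.mem_Iic.2 (csSup_le hYa (fun y hy => hy.2))⟩
    exact le_csSup (bddIic (LClo Y) a) hmem2

lemma LClo_countable {Y : Set Ordinal.{u}} (hc : Y.Countable) : (LClo Y).Countable := by
  classical
  rcases Set.eq_empty_or_nonempty Y with hY | hY
  · have hL : LClo Y = ∅ := by
      rw [Set.eq_empty_iff_forall_notMem]
      rintro v ⟨a, hne, _⟩
      rw [hY] at hne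
      exact absurd hne (by simp)
    rw [hL]; exact Set.countable_empty
  have hbY : BddAbove Y := bddCountable hc
  set S := LClo Y \ Y with hS
  have hbetw : ∀ v ∈ S, ∀ β < v, ∃ y, y ∈ Y ∧ β < y ∧ y < v := by
    rintro v ⟨hvL, hvY⟩ β hβ
    obtain ⟨hne, heq⟩ := LClo_spec hvL
    by_contra hno
    push_neg at hno
    have h1 : sSup (Y ∩ Set.Iic v) ≤ β := by
      refine csSup_le hne (fun y hy => ?_)
      by_contra hyβ
      push_neg at hyβ
      have h2 : v ≤ y := hno y hy.1 hyβ
      have h3 : y = v := le_antisymm hy.2 h2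
      exact hvY (h3 ▸ hy.1)
    rw [← heq] at h1
    exact absurd (lt_of_lt_of_le hβ h1) (lt_irrefl β)
  set f : Ordinal.{u} → Ordinal.{u} := fun v => sInf {y | y ∈ Y ∧ v < y} with hf
  have hmapsto : ∀ v ∈ S, v ≠ sSup Y → f v ∈ Y ∧ v < f v := by
    intro v hv hvs
    have hvle : v ≤ sSup Y := by
      obtain ⟨hne, heq⟩ := LClo_spec hv.1
      rw [heq]
      exact csSup_le_csSup hbY hne Set.inter_subset_left
    have hlt2 : v < sSup Y := lt_of_le_of_ne hvle hvs
    have hne2 : {y | y ∈ Y ∧ v < y}.Nonempty := by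
      by_contra hno
      rw [Set.not_nonempty_iff_eq_empty] at hno
      have h2 : sSup Y ≤ v := by
        refine csSup_le hY (fun y hy => ?_)
        by_contra hyv
        push_neg at hyv
        exact (Set.eq_empty_iff_forall_notMem.1 hno y) ⟨hy, hyv⟩
      exact absurd h2 (not_le.2 hlt2)
    have h3 := csInf_mem hne2
    exact ⟨h3.1, h3.2⟩
  have hinj : Set.InjOn f (S \ {sSup Y}) := by
    intro v1 hv1 v2 hv2 hfe
    by_contra hne12
    have key : ∀ w1 w2, w1 ∈ S \ {sSup Y} → w2 ∈ S \ {sSup Y} → w1 < w2 → f w1 ≠ f w2 := by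
      intro w1 w2 hw1 hw2 hlt12
      obtain ⟨y, hyY, hy1, hy2⟩ := hbetw w2 hw2.1 w1 hlt12
      have h1 : f w1 ≤ y := csInf_le (OrderBot.bddBelow _) ⟨hyY, hy1⟩
      have h2 : w2 < f w2 := (hmapsto w2 hw2.1 (by simpa using hw2.2)).2
      intro he
      rw [he] at h1
      exact absurd (lt_of_le_of_lt h1 (lt_trans hy2 h2)) (lt_irrefl _)
    rcases lt_or_gt_of_ne hne12 with hlt12 | hlt12
    · exact key v1 v2 hv1 hv2 hlt12 hfe
    · exact key v2 v1 hv2 hv1 hlt12 hfe.symm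
  have hSc : (S \ {sSup Y}).Countable := by
    have hYco : Countable ↥Y := hc.to_subtype
    have hinj2 : Function.Injective
        (fun v : ↥(S \ {sSup Y}) =>
          (⟨f v.1, (hmapsto v.1 v.2.1 (by simpa using v.2.2)).1⟩ : ↥Y)) := by
      intro a b hab
      apply Subtype.ext
      exact hinj a.2 b.2 (congrArg Subtype.val hab)
    have : Countable ↥(S \ {sSup Y}) := Function.Injective.countable hinj2
    exact Set.countable_coe_iff.1 this
  have hsub : LClo Y ⊆ (Y ∪ (S \ {sSup Y})) ∪ {sSup Y} := by
    intro v hv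
    by_cases h1 : v ∈ Y
    · exact Or.inl (Or.inl h1)
    by_cases h2 : v = sSup Y
    · exact Or.inr h2
    · exact Or.inl (Or.inr ⟨⟨hv, h1⟩, h2⟩)
  exact (((hc.union hSc).union (Set.countable_singleton _)).mono hsub)

lemma good_LClo (hX : CountablyCompact ↥X) {Y : Set Ordinal.{u}} (hYX : Y ⊆ X)
    (hYc : Y.Countable)
    (hlow : ∀ x ∈ X, ∃ y ∈ Y, y ≤ x)
    (hcap : ∀ c ∈ Y, NI X c → ∀ β < c, (Y ∩ Set.Ioo β c).Nonempty) :
    Good X (LClo Y) := by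
  refine ⟨?_, LClo_countable hYc, ?_, ?_, ?_⟩
  · rintro v ⟨a, hne, rfl⟩
    exact csSup_mem_X hX (hYc.mono Set.inter_subset_left) hne (fun y hy => hYX hy.1)
  · intro a hne
    obtain ⟨hYne, heq⟩ := LClo_sup_eq hne
    rw [heq]
    exact mem_LClo.2 ⟨a, hYne, rfl⟩
  · intro c hc hni β hβ
    by_cases hcY : c ∈ Y
    · obtain ⟨y, hy1, hy2⟩ := hcap c hcY hni β hβ
      exact ⟨y, subset_LClo Y hy1, hy2⟩
    · obtain ⟨hne, heq⟩ := LClo_spec hc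
      have hEx : ∃ y, y ∈ Y ∩ Set.Iic c ∧ β < y := by
        by_contra hno
        push_neg at hno
        have h1 : sSup (Y ∩ Set.Iic c) ≤ β := csSup_le hne hno
        rw [← heq] at h1
        exact absurd hβ (not_lt.2 h1)
      obtain ⟨y, hy, hβy⟩ := hEx
      have hyc : y < c := lt_of_le_of_ne hy.2 (fun h => hcY (h ▸ hy.1))
      exact ⟨y, subset_LClo Y hy.1, hβy, hyc⟩
  · intro x hx
    obtain ⟨y, hyY, hyx⟩ := hlow x hx
    exact ⟨y, subset_LClo Y hyY, hyx⟩

end GoodSets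

/-! ### The retractions associated to good sets -/

section Retraction

variable {X C D : Set Ordinal.{u}}

open Classical in
noncomputable def rr (X C : Set Ordinal.{u}) (x : ↥X) : ↥X :=
  if h : sSup (C ∩ Set.Iic x.val) ∈ X then ⟨sSup (C ∩ Set.Iic x.val), h⟩ else x

lemma Good.sup_in (hC : Good X C) (x : ↥X) : sSup (C ∩ Set.Iic x.val) ∈ C :=
  hC.supmem _ (hC.low x.val x.2)

lemma rr_val (hC : Good X C) (x : ↥X) : (rr X C x).val = sSup (C ∩ Set.Iic x.val) := by
  have h : sSup (C ∩ Set.Iic x.val) ∈ X := hC.subX (hC.sup_in x)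
  simp only [rr, dif_pos h]

lemma rr_val_le (hC : Good X C) (x : ↥X) : (rr X C x).val ≤ x.val := by
  rw [rr_val hC]
  exact csSup_le (hC.low _ x.2) (fun y hy => hy.2)

lemma rr_val_mem (hC : Good X C) (x : ↥X) : (rr X C x).val ∈ C := by
  rw [rr_val hC]; exact hC.sup_in x

lemma le_rr_val (hC : Good X C) (x : ↥X) {c : Ordinal.{u}} (hc : c ∈ C) (hcx : c ≤ x.val) :
    c ≤ (rr X C x).val := by
  rw [rr_val hC]
  exact le_csSup (bddIic C x.val) ⟨hc, hcx⟩

lemma rr_of_mem (hC : Good X C) (x : ↥X) (h : x.val ∈ C) : rr X C x = x :=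
  Subtype.ext (le_antisymm (rr_val_le hC x) (le_rr_val hC x h (le_refl _)))

lemma rr_idem (hC : Good X C) (x : ↥X) : rr X C (rr X C x) = rr X C x :=
  rr_of_mem hC _ (rr_val_mem hC x)

lemma rr_comp_sub (hC : Good X C) (hD : Good X D) (hsub : C ⊆ D) (x : ↥X) :
    rr X C (rr X D x) = rr X C x := by
  apply Subtype.ext
  rw [rr_val hC, rr_val hC]
  apply le_antisymm
  · refine csSup_le (hC.low _ (rr X D x).2) ?_
    rintro y ⟨hyC, hyle⟩
    exact le_csSup (bddIic C x.val) ⟨hyC, le_trans hyle (rr_val_le hD x)⟩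
  · have hm : sSup (C ∩ Set.Iic x.val) ∈ C := hC.sup_in x
    have hmle : sSup (C ∩ Set.Iic x.val) ≤ (rr X D x).val :=
      le_rr_val hD x (hsub hm) (csSup_le (hC.low _ x.2) (fun y hy => hy.2))
    exact le_csSup (bddIic C (rr X D x).val) ⟨hm, hmle⟩

lemma rr_range (hC : Good X C) : Set.range (rr X C) = {x : ↥X | x.val ∈ C} := by
  ext x
  constructor
  · rintro ⟨y, rfl⟩; exact rr_val_mem hC y
  · intro hx; exact ⟨x, rr_of_mem hC x hx⟩

lemma nhds_basis_Ioc {b : Ordinal.{u}} (hb : 0 < b) :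
    (𝓝 b).HasBasis (fun a => a < b) (fun a => Set.Ioc a b) := by
  constructor
  intro t
  constructor
  · intro ht
    obtain ⟨l, hl, hsub⟩ := exists_Ioc_subset_of_mem_nhds ht ⟨0, hb⟩
    exact ⟨l, hl, hsub⟩
  · rintro ⟨a, ha, hsub⟩
    exact Filter.mem_of_superset (Ioc_mem_nhds_self ha) hsub

lemma rr_continuous (hC : Good X C) : Continuous (rr X C) := by
  rw [continuous_iff_continuousAt]
  intro x
  by_cases hiso : IsOpen ({x} : Set ↥X)
  · have hpure : 𝓝 x = pure x :=
      le_antisymm (le_pure_iff.2 (hiso.mem_nhds rfl)) (pure_le_nhds x)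
    unfold ContinuousAt
    rw [hpure]
    exact tendsto_pure_left.2 (fun s hs => mem_of_mem_nhds hs)
  · have hni : NI X x.val := ni_of_not_isOpen x.2 hiso
    have hxpos : 0 < x.val := hni.2.1
    unfold ContinuousAt
    rw [Topology.IsInducing.subtypeVal.tendsto_nhds_iff]
    rcases eq_or_lt_of_le (rr_val_le hC x) with heq | hlt
    · have hxC : x.val ∈ C := heq ▸ rr_val_mem hC x
      rw [heq]
      rw [(nhds_basis_Ioc hxpos).tendsto_right_iff]
      intro β hβ
      obtain ⟨c, hcC, hc1, hc2⟩ := hC.capt x.val hxC hni β hβ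
      have hmem : Subtype.val ⁻¹' Set.Ioc c x.val ∈ 𝓝 x :=
        (continuous_subtype_val.continuousAt).preimage_mem_nhds (Ioc_mem_nhds_self hc2)
      filter_upwards [hmem] with y hy
      show (rr X C y).val ∈ Set.Ioc β x.val
      exact ⟨lt_of_lt_of_le hc1 (le_rr_val hC y hcC hy.1.le),
        le_trans (rr_val_le hC y) hy.2⟩
    · have hmem : Subtype.val ⁻¹' Set.Ioc (rr X C x).val x.val ∈ 𝓝 x :=
        (continuous_subtype_val.continuousAt).preimage_mem_nhds (Ioc_mem_nhds_self hlt)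
      apply Filter.Tendsto.congr' _ tendsto_const_nhds
      filter_upwards [hmem] with y hy
      show (rr X C x).val = (rr X C y).val
      apply le_antisymm
      · exact le_rr_val hC y (rr_val_mem hC x) hy.1.le
      · rw [rr_val hC y]
        refine csSup_le (hC.low _ y.2) ?_
        rintro z ⟨hzC, hzy⟩
        exact le_rr_val hC x hzC (le_trans hzy hy.2)

lemma Good.isCompact_self (hC : Good X C) (hCne : C.Nonempty) : IsCompact C := by
  have hbdd : BddAbove C := bddCountable hC.count
  have hclosed : IsClosed C := by
    apply Ordinal.isClosed_iff_iSup.2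
    intro ι hι f hf
    have hbr : BddAbove (Set.range f) := hbdd.mono (Set.range_subset_iff.2 hf)
    have hne : (C ∩ Set.Iic (⨆ i, f i)).Nonempty := by
      obtain ⟨i⟩ := hι
      exact ⟨f i, hf i, le_ciSup hbr i⟩
    have heq : sSup (C ∩ Set.Iic (⨆ i, f i)) = ⨆ i, f i := by
      apply le_antisymm (csSup_le hne (fun y hy => hy.2))
      exact ciSup_le (fun i => le_csSup (bddIic C _) ⟨hf i, le_ciSup hbr i⟩)
    rw [← heq]
    exact hC.supmem _ hne
  have hself : C ∩ Set.Iic (sSup C) = C :=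
    Set.inter_eq_self_of_subset_left (fun y hy => le_csSup hbdd hy)
  have hM : sSup C ∈ C := by
    have := hC.supmem (sSup C) (by rw [hself]; exact hCne)
    rwa [hself] at this
  exact IsCompact.of_isClosed_subset (isCompact_Icc (a := (0 : Ordinal.{u})) (b := sSup C))
    hclosed (fun y hy => ⟨zero_le, le_csSup hbdd hy⟩)

lemma range_compact (hC : Good X C) (x0 : ↥X) : IsCompact (Set.range (rr X C)) := by
  rw [rr_range hC]
  rw [Topology.IsEmbedding.subtypeVal.isCompact_iff]
  have himg : Subtype.val '' {x : ↥X | x.val ∈ C} = C := by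
    rw [show {x : ↥X | x.val ∈ C} = Subtype.val ⁻¹' C from rfl, Subtype.image_preimage_coe,
      Set.inter_eq_self_of_subset_right hC.subX]
  rw [himg]
  exact hC.isCompact_self ⟨_, hC.sup_in x0⟩

lemma Good.secondCountable (hC : Good X C) : SecondCountableTopology ↥C := by
  classical
  set B : Set (Set ↥C) :=
    (⋃ b ∈ C, ⋃ c ∈ C, {Subtype.val ⁻¹' Set.Ioc b c}) ∪
      (⋃ c ∈ C, {Subtype.val ⁻¹' Set.Iic c}) with hB
  have hcount : B.Countable := by
    refine Set.Countable.union ?_ ?_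
    · exact hC.count.biUnion (fun b _ => hC.count.biUnion (fun c _ => Set.countable_singleton _))
    · exact hC.count.biUnion (fun c _ => Set.countable_singleton _)
  refine TopologicalSpace.IsTopologicalBasis.secondCountableTopology (b := B) ?_ hcount
  apply TopologicalSpace.isTopologicalBasis_of_isOpen_of_nhds
  · intro u hu
    simp only [hB, Set.mem_union, Set.mem_iUnion, Set.mem_singleton_iff] at hu
    rcases hu with ⟨b, _, c, _, rfl⟩ | ⟨c, _, rfl⟩
    · exact (isOpen_Ioc' b c).preimage continuous_subtype_val
    · exact (isOpen_Iic c).preimage continuous_subtype_val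
  · intro x u hxu hu
    have hmemn : u ∈ 𝓝 x := hu.mem_nhds hxu
    rw [nhds_subtype_eq_comap] at hmemn
    obtain ⟨V, hV, hVs⟩ := Filter.mem_comap.1 hmemn
    have hbase1 : ∀ b ∈ C, Subtype.val ⁻¹' Set.Ioc b x.val ∈ B := by
      intro b hb
      simp only [hB, Set.mem_union, Set.mem_iUnion, Set.mem_singleton_iff]
      exact Or.inl ⟨b, hb, x.val, x.2, rfl⟩
    have hbase2 : Subtype.val ⁻¹' Set.Iic x.val ∈ B := by
      simp only [hB, Set.mem_union, Set.mem_iUnion, Set.mem_singleton_iff]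
      exact Or.inr ⟨x.val, x.2, rfl⟩
    by_cases h0 : x.val = 0
    · refine ⟨Subtype.val ⁻¹' Set.Iic x.val, hbase2,
        Set.mem_preimage.2 (Set.mem_Iic.2 (le_refl _)), ?_⟩
      intro y hy
      have hy0 : y.val = 0 := by
        have := hy
        rw [Set.mem_preimage, Set.mem_Iic, h0, nonpos_iff_eq_zero] at this
        exact this
      have hyx : y = x := Subtype.ext (by rw [hy0, h0])
      exact hyx ▸ hxu
    · have hpos : 0 < x.val := pos_iff_ne_zero.2 h0
      obtain ⟨l, hl, hsub⟩ := exists_Ioc_subset_of_mem_nhds hV ⟨0, hpos⟩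
      by_cases hmid : (C ∩ Set.Ioo l x.val).Nonempty
      · obtain ⟨b, hbC, hb1, hb2⟩ := hmid
        refine ⟨Subtype.val ⁻¹' Set.Ioc b x.val, hbase1 b hbC,
          Set.mem_preimage.2 (Set.mem_Ioc.2 ⟨hb2, le_refl _⟩), ?_⟩
        intro y hy
        exact hVs (hsub ⟨lt_trans hb1 hy.1, hy.2⟩)
      · rw [Set.not_nonempty_iff_eq_empty] at hmid
        by_cases hlow2 : (C ∩ Set.Iic l).Nonempty
        · set b := sSup (C ∩ Set.Iic l) with hbdef
          have hbC : b ∈ C := hC.supmem l hlow2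
          have hbl : b ≤ l := csSup_le hlow2 (fun y hy => hy.2)
          refine ⟨Subtype.val ⁻¹' Set.Ioc b x.val, hbase1 b hbC,
            Set.mem_preimage.2 (Set.mem_Ioc.2 ⟨lt_of_le_of_lt hbl hl, le_refl _⟩), ?_⟩
          intro y hy
          rcases eq_or_lt_of_le hy.2 with heq | hlt2
          · have : y = x := Subtype.ext heq
            exact this ▸ hxu
          · rcases le_or_gt y.val l with h1 | h1
            · exact absurd (le_csSup (bddIic C l) ⟨y.2, h1⟩) (not_le.2 hy.1)
            · exfalso
              have hcon : (y : Ordinal) ∈ C ∩ Set.Ioo l x.val := ⟨y.2, h1, hlt2⟩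
              rw [hmid] at hcon
              exact Set.notMem_empty _ hcon
        · refine ⟨Subtype.val ⁻¹' Set.Iic x.val, hbase2,
            Set.mem_preimage.2 (Set.mem_Iic.2 (le_refl _)), ?_⟩
          intro y hy
          rcases eq_or_lt_of_le (Set.mem_Iic.1 (Set.mem_preimage.1 hy)) with heq | hlt2
          · have : y = x := Subtype.ext heq
            exact this ▸ hxu
          · rcases le_or_gt y.val l with h1 | h1
            · exact absurd (⟨y.2, Set.mem_Iic.2 h1⟩ : (y : Ordinal) ∈ C ∩ Set.Iic l)
                (fun hcon => hlow2 ⟨y.val, hcon⟩)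
            · exfalso
              have hcon : (y : Ordinal) ∈ C ∩ Set.Ioo l x.val := ⟨y.2, h1, hlt2⟩
              rw [hmid] at hcon
              exact Set.notMem_empty _ hcon

lemma Good.metrizable (hC : Good X C) : TopologicalSpace.MetrizableSpace ↥C := by
  haveI := hC.secondCountable
  infer_instance

lemma range_metrizable (hC : Good X C) :
    TopologicalSpace.MetrizableSpace ↥(Set.range (rr X C)) := by
  haveI := hC.metrizable
  have hemb : Topology.IsEmbedding
      (fun z : ↥(Set.range (rr X C)) => (⟨z.val.val,
        (Set.ext_iff.1 (rr_range hC) z.val).1 z.2⟩ : ↥C)) :=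
    (Topology.IsEmbedding.subtypeVal.comp Topology.IsEmbedding.subtypeVal).codRestrict _ _
  exact hemb.metrizableSpace

end Retraction

/-! ### Metrizability of the empty space -/

lemma metrizable_of_isEmpty (Y : Type u) [TopologicalSpace Y] [IsEmpty Y] :
    TopologicalSpace.MetrizableSpace Y := by
  have m : MetricSpace Y := MetricSpace.induced (fun y : Y => (isEmptyElim y : ℝ))
    (fun a => isEmptyElim a) inferInstance
  have hts : ∀ (t1 t2 : TopologicalSpace Y), t1 = t2 := by
    intro t1 t2
    refine TopologicalSpace.ext ?_
    funext s
    rw [Set.eq_empty_of_isEmpty s]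
    exact propext ⟨fun _ => @isOpen_empty Y t2, fun _ => @isOpen_empty Y t1⟩
  haveI : TopologicalSpace.PseudoMetrizableSpace Y := ⟨⟨m.toUniformSpace, hts _ _, inferInstance⟩⟩
  haveI : T0Space Y := ⟨fun x => isEmptyElim x⟩
  exact ⟨⟩

lemma hasFull_of_isEmpty (Y : Type u) [TopologicalSpace Y] [IsEmpty Y] :
    HasFullRetractionalSkeleton Y := by
  refine ⟨PUnit.{u+1}, (inferInstance : PartialOrder PUnit.{u+1}), fun _ y => y, ?_,
    fun y => isEmptyElim y⟩
  refine ⟨⟨⟨⟩⟩, fun s t => ⟨t, le_of_eq (Subsingleton.elim s t), le_refl t⟩,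
    fun _ => continuous_id, fun _ => rfl, ?_, ?_, fun _ _ _ => ⟨rfl, rfl⟩, ?_, fun y => isEmptyElim y⟩
  · intro s
    rw [Set.range_eq_empty]
    exact isCompact_empty
  · intro s
    exact metrizable_of_isEmpty _
  · intro v _
    refine ⟨⟨⟩, ⟨fun a _ => le_of_eq (Subsingleton.elim a _), fun b _ => le_of_eq (Subsingleton.elim _ b)⟩, ?_⟩
    intro y
    exact isEmptyElim y

end NCCAux

open NCCAux

/-! ### The two directions -/

lemma forward_dir (X : Set Ordinal.{u}) (hX : CountablyCompact ↥X)
    (h : HasFullRetractionalSkeleton ↥X) :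
    ∀ (α : Ordinal.{u}) (hα : α ∈ X), Cardinal.aleph0 < α.cof →
      IsOpen ({⟨α, hα⟩} : Set ↥X) := by
  obtain ⟨Γ, pΓ, r, hskel, hfull⟩ := h
  intro α hα hcof
  by_contra hiso
  have hni : NI X α := ni_of_not_isOpen hα hiso
  set A : ↥X := ⟨α, hα⟩ with hA
  have hrange_mono : ∀ s t : Γ, s ≤ t → Set.range (r s) ⊆ Set.range (r t) := by
    intro s t hst
    rintro z ⟨y, rfl⟩
    exact ⟨r s y, congrFun (hskel.comp_eq_of_le s t hst).1 y⟩
  have hfix : ∀ (s : Γ) (z : ↥X), z ∈ Set.range (r s) → r s z = z := by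
    rintro s z ⟨y, rfl⟩
    exact congrFun (hskel.retraction s) y
  -- bound on the range below α
  have hbound : ∀ s : Γ, A ∈ Set.range (r s) →
      ∃ γ < α, ∀ z : ↥X, z ∈ Set.range (r s) → z.val < α → z.val ≤ γ := by
    intro s hAs
    set K := Set.range (r s) with hK
    set A' := Subtype.val '' K ∩ Set.Iio α with hA'
    have hγα : sSup A' < α := by
      by_contra hge
      push_neg at hge
      have hA'ne : A'.Nonempty := by
        rcases Set.eq_empty_or_nonempty A' with he | hne2
        · exfalso
          rw [he, csSup_empty] at hge
          exact absurd (lt_of_lt_of_le hni.2.1 hge) (lt_irrefl 0)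
        · exact hne2
      have hBdd : BddAbove A' := ⟨α, fun y hy => hy.2.le⟩
      have hsupA : sSup A' = α := le_antisymm (csSup_le hA'ne (fun y hy => hy.2.le)) hge
      have hclA : α ∈ closure A' := hsupA ▸ csSup_mem_closure hA'ne hBdd
      haveI hKmet : TopologicalSpace.MetrizableSpace ↥K := hskel.metrizable_range s
      set AK : ↥K := ⟨A, hAs⟩ with hAK
      set B : Set ↥K := {k : ↥K | (k : ↥X).val < α} with hBdef
      have himg : Subtype.val '' (Subtype.val '' B) = A' := by
        ext z
        constructor
        · rintro ⟨y, ⟨k, hk, rfl⟩, rfl⟩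
          exact ⟨⟨k.val, k.2, rfl⟩, hk⟩
        · rintro ⟨⟨y, hy, rfl⟩, hz⟩
          exact ⟨y, ⟨⟨y, hy⟩, hz, rfl⟩, rfl⟩
      have hABcl : AK ∈ closure B := by
        rw [closure_subtype, closure_subtype, himg]
        exact hclA
      obtain ⟨g, hgB, hgt⟩ := mem_closure_iff_seq_limit.1 hABcl
      have hvt : Filter.Tendsto (fun n => ((g n : ↥X) : Ordinal)) Filter.atTop (𝓝 α) := by
        have c1 : Continuous (fun k : ↥K => ((k : ↥X) : Ordinal)) :=
          continuous_subtype_val.comp continuous_subtype_val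
        have c2 : Filter.Tendsto (fun k : ↥K => ((k : ↥X) : Ordinal)) (𝓝 AK) (𝓝 α) :=
          c1.continuousAt (x := AK)
        exact c2.comp hgt
      have hbr : BddAbove (Set.range (fun n => ((g n : ↥X) : Ordinal))) :=
        ⟨α, by rintro y ⟨n, rfl⟩; exact (hgB n).le⟩
      have hsup2 : (⨆ n, ((g n : ↥X) : Ordinal)) = α := by
        apply le_antisymm
        · exact ciSup_le (fun n => (hgB n).le)
        · by_contra hlt2
          push_neg at hlt2
          have h3 := hvt (Ioc_mem_nhds_self hlt2)
          rw [Filter.mem_map] at h3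
          have h4 : ∀ᶠ n in Filter.atTop,
              ((g n : ↥X) : Ordinal) ∈ Set.Ioc (⨆ m, ((g m : ↥X) : Ordinal)) α := h3
          obtain ⟨n, hn⟩ := h4.exists
          exact absurd (le_ciSup hbr n) (not_le.2 hn.1)
      have hcof2 : Ordinal.cof α ≤ Cardinal.aleph0 := by
        rw [← hsup2]
        have h4 := Ordinal.cof_iSup_le_lift (f := fun n => ((g n : ↥X) : Ordinal))
          (fun i => by rw [hsup2]; exact hgB i)
        simpa using h4
      exact absurd hcof (not_lt.2 hcof2)
    refine ⟨sSup A', hγα, ?_⟩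
    intro z hz hzα
    exact le_csSup ⟨α, fun y hy => hy.2.le⟩ ⟨Set.mem_image_of_mem _ hz, hzα⟩
  -- tail lemma
  have htail : ∀ s : Γ, A ∈ Set.range (r s) →
      ∃ δ < α, ∀ z : ↥X, δ < z.val → z.val ≤ α → r s z = A := by
    intro s hAs
    obtain ⟨γ, hγα, hγ⟩ := hbound s hAs
    have hc : ContinuousAt (r s) A := (hskel.continuous s).continuousAt
    have hrA : r s A = A := hfix s A hAs
    have hV : Subtype.val ⁻¹' Set.Ioc γ α ∈ 𝓝 (r s A) := by
      rw [hrA]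
      exact (continuous_subtype_val.continuousAt).preimage_mem_nhds (Ioc_mem_nhds_self hγα)
    have hW := hc hV
    rw [nhds_subtype_eq_comap] at hW
    obtain ⟨V2, hV2, hV2s⟩ := Filter.mem_comap.1 hW
    obtain ⟨δ0, hδ0, hδsub⟩ := exists_Ioc_subset_of_mem_nhds hV2 ⟨0, hni.2.1⟩
    refine ⟨max δ0 γ, max_lt hδ0 hγα, ?_⟩
    intro z hz1 hz2
    have hzV : z ∈ (r s) ⁻¹' (Subtype.val ⁻¹' Set.Ioc γ α) :=
      hV2s (hδsub ⟨lt_of_le_of_lt (le_max_left δ0 γ) hz1, hz2⟩)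
    have h1 : γ < (r s z).val ∧ (r s z).val ≤ α := hzV
    rcases eq_or_lt_of_le h1.2 with he | hl
    · exact Subtype.ext he
    · exact absurd (hγ (r s z) ⟨z, rfl⟩ hl) (not_le.2 h1.1)
  classical
  set D : Γ → Ordinal.{u} := fun s =>
    if h : A ∈ Set.range (r s) then (htail s h).choose else 0 with hD
  have hDlt : ∀ s, A ∈ Set.range (r s) →
      D s < α ∧ ∀ z : ↥X, D s < z.val → z.val ≤ α → r s z = A := by
    intro s h
    rw [hD]
    simp only [dif_pos h]
    obtain ⟨h1, h2⟩ := (htail s h).choose_spec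
    exact ⟨h1, h2⟩
  set I : Γ × Ordinal.{u} → Prop := fun p =>
    A ∈ Set.range (r p.1) ∧ p.2 < α ∧ ∃ z : ↥X, z ∈ Set.range (r p.1) ∧ z.val = p.2 with hI
  have hstep : ∀ p, I p → ∃ q, I q ∧ p.1 ≤ q.1 ∧ max (D p.1) p.2 < q.2 := by
    rintro ⟨s, x⟩ ⟨hAs, hxα, _⟩
    have hμ : max (D s) x < α := max_lt (hDlt s hAs).1 hxα
    obtain ⟨w, hwX, hw1, hw2⟩ := hni.2.2 _ hμ
    obtain ⟨sw, hsw⟩ := hfull ⟨w, hwX⟩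
    obtain ⟨t, hst, hswt⟩ := hskel.directed s sw
    exact ⟨⟨t, w⟩, ⟨hrange_mono s t hst hAs, hw2, ⟨w, hwX⟩, hrange_mono sw t hswt hsw, rfl⟩,
      hst, hw1⟩
  have hbase : ∃ p, I p := by
    obtain ⟨w, hwX, _, hw2⟩ := hni.2.2 0 hni.2.1
    obtain ⟨sA, hsA⟩ := hfull A
    obtain ⟨sw, hsw⟩ := hfull ⟨w, hwX⟩
    obtain ⟨t, h1, h2⟩ := hskel.directed sA sw
    exact ⟨⟨t, w⟩, hrange_mono _ _ h1 hsA, hw2, ⟨w, hwX⟩, hrange_mono _ _ h2 hsw, rfl⟩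
  obtain ⟨p0, hp0⟩ := hbase
  set F : ℕ → Γ × Ordinal.{u} := fun n =>
    Nat.rec p0 (fun _ p => if h : I p then (hstep p h).choose else p) n with hF
  have hFsucc : ∀ n, F (n + 1) = if h : I (F n) then (hstep (F n) h).choose else F n :=
    fun n => rfl
  have hFI : ∀ n, I (F n) := by
    intro n
    induction n with
    | zero => exact hp0
    | succ m ih =>
      rw [hFsucc, dif_pos ih]
      exact (hstep (F m) ih).choose_spec.1
  have hFstep : ∀ n, (F n).1 ≤ (F (n + 1)).1 ∧ max (D (F n).1) (F n).2 < (F (n + 1)).2 := by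
    intro n
    rw [hFsucc, dif_pos (hFI n)]
    exact ⟨(hstep (F n) (hFI n)).choose_spec.2.1, (hstep (F n) (hFI n)).choose_spec.2.2⟩
  set sseq : ℕ → Γ := fun n => (F n).1 with hsseq
  set xseq : ℕ → Ordinal.{u} := fun n => (F n).2 with hxseq
  have hsmono : Monotone sseq := monotone_nat_of_le_succ (fun n => (hFstep n).1)
  have hxlt : ∀ n, xseq n < xseq (n + 1) :=
    fun n => lt_of_le_of_lt (le_max_right _ _) (hFstep n).2
  have hxα : ∀ n, xseq n < α := fun n => (hFI n).2.1
  have hxmono : Monotone xseq := monotone_nat_of_le_succ (fun n => (hxlt n).le)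
  set β := ⨆ n, xseq n with hβ
  have hbddx : BddAbove (Set.range xseq) := ⟨α, by rintro y ⟨n, rfl⟩; exact (hxα n).le⟩
  have hβα : β < α := by
    rcases lt_or_ge β α with hb | hb
    · exact hb
    exfalso
    have hsupeq : (⨆ n, xseq n) = α := le_antisymm (ciSup_le (fun n => (hxα n).le)) hb
    have hc2 : Ordinal.cof α ≤ Cardinal.aleph0 := by
      rw [← hsupeq]
      have h4 := Ordinal.cof_iSup_le_lift (f := xseq) (fun i => by rw [hsupeq]; exact hxα i)
      simpa using h4
    exact absurd hcof (not_lt.2 hc2)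
  have hxX : ∀ n, xseq n ∈ X := by
    intro n
    obtain ⟨z, _, hz⟩ := (hFI n).2.2
    show (F n).2 ∈ X
    exact hz ▸ z.2
  have hβX : β ∈ X := iSup_mem_of_monotone hX hxmono hxX
  set Bp : ↥X := ⟨β, hβX⟩ with hBp
  obtain ⟨t, htlub, htconv⟩ := hskel.seq_sup sseq hsmono
  have hBt : Bp ∈ Set.range (r t) := by
    have hcl : IsClosed (Set.range (r t)) := (hskel.compact_range t).isClosed
    choose z hz1 hz2 using fun n => (hFI n).2.2
    have hzt : ∀ n, z n ∈ Set.range (r t) := by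
      intro n
      exact hrange_mono _ _ (htlub.1 ⟨n, rfl⟩) (hz1 n)
    have hzconv : Filter.Tendsto z Filter.atTop (𝓝 Bp) := by
      rw [Topology.IsInducing.subtypeVal.tendsto_nhds_iff]
      have hfn : (fun n => (z n).val) = xseq := funext hz2
      rw [show ((Subtype.val : ↥X → Ordinal) ∘ z) = xseq from hfn]
      exact tendsto_atTop_ciSup hxmono hbddx
    exact hcl.mem_of_tendsto hzconv (Filter.Eventually.of_forall hzt)
  have hconst : ∀ n, r (sseq n) Bp = A := by
    intro n
    refine (hDlt (sseq n) (hFI n).1).2 Bp ?_ hβα.le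
    have h1 : D (sseq n) < xseq (n + 1) := lt_of_le_of_lt (le_max_left _ _) (hFstep n).2
    exact lt_of_lt_of_le h1 (le_ciSup hbddx (n + 1))
  have hlim : r t Bp = A := by
    have h1 := htconv Bp
    rw [show (fun n => r (sseq n) Bp) = (fun _ => A) from funext hconst] at h1
    exact (tendsto_nhds_unique h1 tendsto_const_nhds)
  have hfixB : r t Bp = Bp := hfix t Bp hBt
  rw [hfixB] at hlim
  have hβeq : β = α := congrArg Subtype.val hlim
  exact absurd (hβeq ▸ hβα) (lt_irrefl α)

lemma reverse_dir (X : Set Ordinal.{u}) (hX : CountablyCompact ↥X)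
    (hiso : ∀ (α : Ordinal.{u}) (hα : α ∈ X), Cardinal.aleph0 < α.cof →
      IsOpen ({⟨α, hα⟩} : Set ↥X)) :
    HasFullRetractionalSkeleton ↥X := by
  classical
  rcases Set.eq_empty_or_nonempty X with hXe | hXne
  · haveI : IsEmpty ↥X := by rw [hXe]; infer_instance
    exact hasFull_of_isEmpty ↥X
  have hcofle : ∀ c, NI X c → Ordinal.cof c ≤ Cardinal.aleph0 := by
    intro c hc
    by_contra hlt
    push_neg at hlt
    exact not_isOpen_of_ni hc (hiso c hc.1 hlt)
  have hseq : ∀ c, NI X c → ∃ g : ℕ → Ordinal.{u},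
      (∀ n, g n ∈ X ∩ Set.Iio c) ∧ ∀ β < c, ∃ n, β < g n :=
    fun c hc => exists_cofinal_seq hc (hcofle c hc)
  choose! cs hcs1 hcs2 using hseq
  have hlt : ∀ c, NI X c → ∀ n, cs c n < c := fun c hc n => (hcs1 c hc n).2
  -- extension of countable sets to good sets
  have hext : ∀ D : Set Ordinal.{u}, D.Countable → D ⊆ X → ∃ C, Good X C ∧ D ⊆ C := by
    intro D hDc hDX
    set ℓ := sInf X with hℓ
    have hℓX : ℓ ∈ X := csInf_mem hXne
    set Y := ⋃ d ∈ insert ℓ D, GSet X cs hlt d with hY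
    have hYX : Y ⊆ X := by
      intro y hy
      obtain ⟨d, hd, hyd⟩ := Set.mem_iUnion₂.1 hy
      have hdX : d ∈ X := by
        rcases Set.mem_insert_iff.1 hd with rfl | hdD
        · exact hℓX
        · exact hDX hdD
      exact GSet_sub_X (fun c h n => (hcs1 c h n).1) d hdX hyd
    have hYc : Y.Countable := (hDc.insert ℓ).biUnion (fun d _ => GSet_countable d)
    have hcap : ∀ c ∈ Y, NI X c → ∀ β < c, (Y ∩ Set.Ioo β c).Nonempty := by
      intro c hc hni β hβ
      obtain ⟨d, hd, hcd⟩ := Set.mem_iUnion₂.1 hc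
      obtain ⟨y, hy1, hy2⟩ := GSet_capture hcs2 hcd hni hβ
      exact ⟨y, Set.mem_iUnion₂.2 ⟨d, hd, hy1⟩, hy2⟩
    have hlow : ∀ x ∈ X, ∃ y ∈ Y, y ≤ x := by
      intro x hx
      exact ⟨ℓ, Set.mem_iUnion₂.2 ⟨ℓ, Set.mem_insert _ _, GSet_self ℓ⟩,
        csInf_le (OrderBot.bddBelow X) hx⟩
    refine ⟨LClo Y, good_LClo hX hYX hYc hlow hcap, ?_⟩
    intro d hd
    exact subset_LClo Y (Set.mem_iUnion₂.2 ⟨d, Set.mem_insert_of_mem _ hd, GSet_self d⟩)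
  have hmk : ∀ {E : Set Ordinal.{u}}, Good X E →
      Good X (Subtype.val '' (Subtype.val ⁻¹' E : Set ↥X)) := by
    intro E hE
    rwa [Subtype.image_preimage_coe, Set.inter_eq_self_of_subset_right hE.subX]
  have hmkeq : ∀ {E : Set Ordinal.{u}}, E ⊆ X →
      Subtype.val '' (Subtype.val ⁻¹' E : Set ↥X) = E := by
    intro E hE
    rw [Subtype.image_preimage_coe, Set.inter_eq_self_of_subset_right hE]
  set x0 : ↥X := ⟨hXne.choose, hXne.choose_spec⟩ with hx0
  refine ⟨{C : Set ↥X // Good X (Subtype.val '' C)}, inferInstance,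
    fun C => rr X (Subtype.val '' C.val), ⟨?_, ?_, ?_, ?_, ?_, ?_, ?_, ?_, ?_⟩, ?_⟩
  · -- nonempty
    obtain ⟨C0, hC0, _⟩ := hext ∅ Set.countable_empty (Set.empty_subset X)
    exact ⟨⟨Subtype.val ⁻¹' C0, hmk hC0⟩⟩
  · -- directed
    intro s t
    set Ys := Subtype.val '' s.val ∪ Subtype.val '' t.val with hYs
    have hYsX : Ys ⊆ X := Set.union_subset s.2.subX t.2.subX
    have hYsc : Ys.Countable := s.2.count.union t.2.count
    have hYlow : ∀ x ∈ X, ∃ y ∈ Ys, y ≤ x := by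
      intro x hx
      obtain ⟨y, hy1, hy2⟩ := s.2.low x hx
      exact ⟨y, Or.inl hy1, hy2⟩
    have hYcap : ∀ c ∈ Ys, NI X c → ∀ β < c, (Ys ∩ Set.Ioo β c).Nonempty := by
      intro c hc hni β hβ
      rcases hc with hc | hc
      · obtain ⟨y, hy1, hy2⟩ := s.2.capt c hc hni β hβ
        exact ⟨y, Or.inl hy1, hy2⟩
      · obtain ⟨y, hy1, hy2⟩ := t.2.capt c hc hni β hβ
        exact ⟨y, Or.inr hy1, hy2⟩
    have hE : Good X (LClo Ys) := good_LClo hX hYsX hYsc hYlow hYcap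
    refine ⟨⟨Subtype.val ⁻¹' LClo Ys, hmk hE⟩, ?_, ?_⟩
    · intro z hz
      exact subset_LClo Ys (Or.inl (Set.mem_image_of_mem _ hz))
    · intro z hz
      exact subset_LClo Ys (Or.inr (Set.mem_image_of_mem _ hz))
  · -- continuous
    intro s
    exact rr_continuous s.2
  · -- retraction
    intro s
    funext x
    exact rr_idem s.2 x
  · -- compact range
    intro s
    exact range_compact s.2 x0
  · -- metrizable range
    intro s
    exact range_metrizable s.2
  · -- comp_eq_of_le
    intro s t hst
    constructor
    · funext x
      exact rr_of_mem t.2 _ (Set.image_mono (f := Subtype.val) hst (rr_val_mem s.2 x))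
    · funext x
      exact rr_comp_sub s.2 t.2 (Set.image_mono (f := Subtype.val) hst) x
  · -- seq_sup
    intro u hu
    set U := ⋃ n, Subtype.val '' (u n).val with hU
    have hUX : U ⊆ X := by
      intro y hy
      obtain ⟨n, hy⟩ := Set.mem_iUnion.1 hy
      exact (u n).2.subX hy
    have hUc : U.Countable := Set.countable_iUnion (fun n => (u n).2.count)
    have hUlow : ∀ x ∈ X, ∃ y ∈ U, y ≤ x := by
      intro x hx
      obtain ⟨y, hy1, hy2⟩ := (u 0).2.low x hx
      exact ⟨y, Set.mem_iUnion.2 ⟨0, hy1⟩, hy2⟩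
    have hUcap : ∀ c ∈ U, NI X c → ∀ β < c, (U ∩ Set.Ioo β c).Nonempty := by
      intro c hc hni β hβ
      obtain ⟨n, hc⟩ := Set.mem_iUnion.1 hc
      obtain ⟨y, hy1, hy2⟩ := (u n).2.capt c hc hni β hβ
      exact ⟨y, Set.mem_iUnion.2 ⟨n, hy1⟩, hy2⟩
    have hE : Good X (LClo U) := good_LClo hX hUX hUc hUlow hUcap
    refine ⟨⟨Subtype.val ⁻¹' LClo U, hmk hE⟩, ⟨?_, ?_⟩, ?_⟩
    · rintro C ⟨n, rfl⟩
      intro z hz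
      exact subset_LClo U (Set.mem_iUnion.2 ⟨n, Set.mem_image_of_mem _ hz⟩)
    · intro b hb
      have hUb : U ⊆ Subtype.val '' b.val := by
        intro y hy
        obtain ⟨n, hy⟩ := Set.mem_iUnion.1 hy
        exact Set.image_mono (f := Subtype.val) (hb ⟨n, rfl⟩) hy
      have hsubb : LClo U ⊆ Subtype.val '' b.val := by
        rintro v ⟨a, hne, rfl⟩
        set vb := Subtype.val '' b.val with hvb
        have hsub2 : U ∩ Set.Iic a ⊆ vb ∩ Set.Iic (sSup (U ∩ Set.Iic a)) :=
          fun y hy => ⟨hUb hy.1, le_csSup (bddIic U a) hy⟩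
        have hne2 : (vb ∩ Set.Iic (sSup (U ∩ Set.Iic a))).Nonempty := hne.mono hsub2
        have heq : sSup (vb ∩ Set.Iic (sSup (U ∩ Set.Iic a))) = sSup (U ∩ Set.Iic a) :=
          le_antisymm (csSup_le hne2 (fun y hy => hy.2))
            (csSup_le_csSup (bddIic vb _) hne hsub2)
        exact heq ▸ b.2.supmem _ hne2
      intro z hz
      obtain ⟨w, hwb, hwz⟩ := hsubb hz
      exact (Subtype.ext hwz : w = z) ▸ hwb
    · intro x
      rw [Topology.IsInducing.subtypeVal.tendsto_nhds_iff]
      have h1 : (rr X (Subtype.val '' (Subtype.val ⁻¹' LClo U : Set ↥X)) x).val =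
          sSup (LClo U ∩ Set.Iic x.val) := by
        rw [rr_val (hmk hE), hmkeq hE.subX]
      have h2 : ∀ n, (rr X (Subtype.val '' (u n).val) x).val =
          sSup (Subtype.val '' (u n).val ∩ Set.Iic x.val) := fun n => rr_val (u n).2 x
      set m : ℕ → Ordinal.{u} := fun n => sSup (Subtype.val '' (u n).val ∩ Set.Iic x.val)
        with hm
      have hmono : Monotone m := by
        intro i j hij
        exact csSup_le_csSup (bddIic _ _) ((u i).2.low x.val x.2)
          (fun y hy => ⟨Set.image_mono (f := Subtype.val) (hu hij) hy.1, hy.2⟩)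
      have hbdd : BddAbove (Set.range m) := by
        refine ⟨x.val, ?_⟩
        rintro y ⟨n, rfl⟩
        exact csSup_le ((u n).2.low x.val x.2) (fun z hz => hz.2)
      have hsup : (⨆ n, m n) = sSup (LClo U ∩ Set.Iic x.val) := by
        have e1 : sSup (LClo U ∩ Set.Iic x.val) = sSup (U ∩ Set.Iic x.val) :=
          (LClo_sup_eq (hE.low x.val x.2)).2
        rw [e1]
        apply le_antisymm
        · refine ciSup_le (fun n => ?_)
          exact csSup_le_csSup (bddIic _ _) ((u n).2.low x.val x.2)
            (fun y hy => ⟨Set.mem_iUnion.2 ⟨n, hy.1⟩, hy.2⟩)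
        · refine csSup_le ?_ ?_
          · obtain ⟨y, hy1, hy2⟩ := (u 0).2.low x.val x.2
            exact ⟨y, Set.mem_iUnion.2 ⟨0, hy1⟩, hy2⟩
          · rintro y ⟨hyU, hyx⟩
            obtain ⟨n, hyn⟩ := Set.mem_iUnion.1 hyU
            exact le_trans (le_csSup (bddIic _ _) ⟨hyn, hyx⟩) (le_ciSup hbdd n)
      have hgoal : Filter.Tendsto m Filter.atTop
          (𝓝 (sSup (LClo U ∩ Set.Iic x.val))) := by
        rw [← hsup]
        exact tendsto_atTop_ciSup hmono hbdd
      rw [show ((Subtype.val : ↥X → Ordinal) ∘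
        (fun n => rr X (Subtype.val '' (u n).val) x)) = m from funext h2, h1]
      exact hgoal
  · -- tendsto_id
    intro x
    obtain ⟨C0, hC0, hxC0⟩ := hext {x.val} (Set.countable_singleton _)
      (by rintro y rfl; exact x.2)
    have hxmem : x.val ∈ C0 := hxC0 rfl
    apply Filter.Tendsto.congr' _ (tendsto_const_nhds (x := x))
    filter_upwards [Filter.eventually_ge_atTop (⟨Subtype.val ⁻¹' C0, hmk hC0⟩ :
      {C : Set ↥X // Good X (Subtype.val '' C)})] with C hC
    exact (rr_of_mem C.2 x ⟨x, hC hxmem, rfl⟩).symm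
  · -- fullness
    intro x
    obtain ⟨C0, hC0, hxC0⟩ := hext {x.val} (Set.countable_singleton _)
      (by rintro y rfl; exact x.2)
    refine ⟨⟨Subtype.val ⁻¹' C0, hmk hC0⟩, ?_⟩
    rw [rr_range (hmk hC0)]
    exact ⟨x, hxC0 rfl, rfl⟩

/-- A countably compact set of ordinals admits a full retractional skeleton
iff every ordinal of uncountable cofinality in it is isolated in it. -/
theorem ncCorson_ordinals_iff_isolated
    (X : Set Ordinal.{u}) (hX : CountablyCompact ↥X) :
    HasFullRetractionalSkeleton ↥X ↔
      ∀ (α : Ordinal.{u}) (hα : α ∈ X), Cardinal.aleph0 < α.cof →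
        IsOpen ({⟨α, hα⟩} : Set ↥X) := by
  constructor
  · intro h
    exact forward_dir X hX h
  · intro h
    exact reverse_dir X hX h
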